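/- Let F be a field of prime characteristic p, let D be a finite p-group, let A be a finite-dimensional unital associative F-algebra, let σ : D → A^× be a group homomorphism, and let Ω be a D×D-stable basis of A. Let P and Q be subgroups of D, let φ : Q → P be a group isomorphism, and suppose there is a unit u ∈ A^× with σ(φ(q)) u = u σ(q) for all q ∈ Q. Then the three cardinalities |{w ∈ Ω : σ(φ(q)) w σ(q)⁻¹ = w for all q ∈ Q}|, |{w ∈ Ω : σ(q) w = w σ(q) for all q ∈ Q}|, and |{w ∈ Ω : σ(p) w = w σ(p) for all p ∈ P}| are all equal. -/

import Mathlib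

open Module MulAction

section Key

variable {F : Type*} [Field F] {p : ℕ} [Fact p.Prime] [CharP F p]
variable {A : Type*} [Ring A] [Algebra F A] [FiniteDimensional F A]
variable {G : Type*} [Group G] [Finite G]

variable (F) in
/-- The fixed submodule of a linear action. -/
def fixSub (ρ : G →* (A ≃ₗ[F] A)) : Submodule F A where
  carrier := {v | ∀ g, ρ g v = v}
  add_mem' := by intro a b ha hb g; simp [map_add, ha g, hb g]
  zero_mem' := by intro g; simp
  smul_mem' := by intro c a ha g; simp [map_smul, ha g]

variable (F) in
/-- The augmentation-ideal image submodule. -/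
def imSub (ρ : G →* (A ≃ₗ[F] A)) : Submodule F A :=
  Submodule.span F {x | ∃ g v, ρ g v - v = x}

set_option linter.unusedSectionVars false in
lemma mem_fixSub {ρ : G →* (A ≃ₗ[F] A)} {x : A} :
    x ∈ fixSub F ρ ↔ ∀ g, ρ g x = x := Iff.rfl

set_option maxHeartbeats 1000000 in
theorem key_count (hG : IsPGroup p G) (ρ : G →* (A ≃ₗ[F] A)) (Ω : Finset A)
    (hli : LinearIndependent F (fun x : (Ω : Set A) => (x : A)))
    (hsp : Submodule.span F (Ω : Set A) = ⊤)
    (hstab : ∀ w ∈ Ω, ∀ g : G, ρ g w ∈ Ω) :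
    {w ∈ (Ω : Set A) | ∀ g : G, ρ g w = w}.ncard
      + finrank F ↥(fixSub F ρ ⊓ imSub F ρ) = finrank F ↥(fixSub F ρ) := by
  classical
  letI : MulAction G A := MulAction.compHom A ρ
  have hsmul : ∀ (g : G) (a : A), g • a = ρ g a := fun _ _ => rfl
  set ι := ↥(Ω : Set A) with hι
  have hmem : ∀ i : ι, (i : A) ∈ Ω := fun i => i.2
  let b : Basis ι F A := Basis.mk hli (by rw [Subtype.range_coe]; exact hsp.ge)
  have hb : ∀ i : ι, b i = (i : A) := fun i => Basis.mk_apply _ _ i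
  have hcomp : ∀ (g h : G) (x : A), ρ (g * h) x = ρ g (ρ h x) := by
    intro g h x; rw [map_mul]; rfl
  have hρinv : ∀ (g : G) (x : A), ρ g⁻¹ (ρ g x) = x := by
    intro g x; rw [← hcomp, inv_mul_cancel, map_one]; rfl
  have hrepr_basis : ∀ (w : A) (hw : w ∈ Ω) (i : ι),
      b.repr w i = if w = (i : A) then 1 else 0 := by
    intro w hw i
    rw [show w = b ⟨w, hw⟩ from (hb ⟨w, hw⟩).symm, b.repr_self, Finsupp.single_apply]
    have hiff : (⟨w, hw⟩ : ι) = i ↔ w = (i : A) := ⟨fun h => by rw [← h], fun h => Subtype.ext h⟩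
    simp only [hb]
    simp [hiff]
  have hrepr : ∀ (g : G) (w : A) (hw : w ∈ Ω) (v : A),
      b.repr (ρ g v) ⟨ρ g w, hstab w hw g⟩ = b.repr v ⟨w, hw⟩ := by
    intro g w hw v
    have hv : (∑ i : ι, b.repr v i • b i) = v := b.sum_repr v
    conv_lhs => rw [← hv]
    rw [map_sum, map_sum, Finset.sum_apply']
    simp only [map_smul, Finsupp.smul_apply, smul_eq_mul]
    have : ∀ i : ι, b.repr (ρ g (b i)) ⟨ρ g w, hstab w hw g⟩
        = if i = ⟨w, hw⟩ then 1 else 0 := by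
      intro i
      rw [hb, hrepr_basis (ρ g (i : A)) (hstab _ (hmem i) g)]
      simp only [EmbeddingLike.apply_eq_iff_eq]
      congr 1
      exact propext ⟨fun h => Subtype.ext h, fun h => by rw [h]⟩
    rw [Finset.sum_congr rfl fun i _ => by rw [this i]]
    simp [Finset.sum_ite_eq']
    exact (Finset.sum_eq_single_of_mem _ (Finset.mem_univ _) (fun b _ hb => if_neg hb)).trans (if_pos rfl)
  -- orbit sums
  have horb : ∀ (w₀ : A) (hw₀ : w₀ ∈ Ω) (g₀ : G), ρ g₀ w₀ ≠ w₀ →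
      ∃ t : A, t ∈ fixSub F ρ ∧ t ∈ imSub F ρ ∧
        (∀ i : ι, b.repr t i = if (i : A) ∈ orbit G w₀ then 1 else 0) := by
    intro w₀ hw₀ g₀ hg₀
    have hOsub : orbit G w₀ ⊆ (Ω : Set A) := by
      rintro x ⟨g, rfl⟩; exact hstab w₀ hw₀ g
    have hOfin : (orbit G w₀).Finite := Set.Finite.subset Ω.finite_toSet hOsub
    let Of : Finset A := hOfin.toFinset
    have hOf : ∀ x, x ∈ Of ↔ x ∈ orbit G w₀ := fun x => hOfin.mem_toFinset
    have hOmemΩ : ∀ u ∈ Of, u ∈ Ω := fun u hu => hOsub ((hOf u).1 hu)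
    have hOstable : ∀ (g : G), ∀ u ∈ Of, ρ g u ∈ Of := by
      intro g u hu
      rw [hOf] at hu ⊢
      obtain ⟨h, rfl⟩ := hu
      refine ⟨g * h, ?_⟩
      show ρ (g * h) w₀ = ρ g (ρ h w₀)
      exact hcomp g h w₀
    have hcard1 : Nat.card (orbit G w₀) = Of.card := by
      rw [Nat.card_coe_set_eq, Set.ncard_eq_toFinset_card _ hOfin]
    have hdvd : Nat.card (orbit G w₀) ∣ Nat.card G := by
      rw [Nat.card_congr (orbitEquivQuotientStabilizer G w₀), ← Subgroup.index_eq_card]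
      exact Subgroup.index_dvd_card _
    obtain ⟨n, hn⟩ := IsPGroup.iff_card.mp hG
    rw [hn] at hdvd
    obtain ⟨k, hk, hOcard⟩ := (Nat.dvd_prime_pow Fact.out).mp hdvd
    have hk0 : k ≠ 0 := by
      rintro rfl
      rw [pow_zero] at hOcard
      obtain ⟨a, ha⟩ := Set.ncard_eq_one.mp
        (by rw [← Nat.card_coe_set_eq, hOcard])
      have h1 : w₀ ∈ orbit G w₀ := mem_orbit_self w₀
      have h2 : ρ g₀ w₀ ∈ orbit G w₀ := ⟨g₀, rfl⟩
      rw [ha, Set.mem_singleton_iff] at h1 h2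
      exact hg₀ (h2.trans h1.symm)
    have hcharp : ((Of.card : F)) = 0 := by
      rw [(CharP.cast_eq_zero_iff F p _)]
      rw [← hcard1, hOcard]
      exact dvd_pow_self p hk0
    refine ⟨∑ u ∈ Of, u, ?_, ?_, ?_⟩
    · intro g
      rw [map_sum]
      refine Finset.sum_nbij' (fun u => ρ g u) (fun u => ρ g⁻¹ u)
        (fun u hu => hOstable g u hu) (fun u hu => hOstable g⁻¹ u hu)
        (fun u _ => hρinv g u) (fun u _ => ?_) (fun u _ => rfl)
      show ρ g (ρ g⁻¹ u) = u
      rw [← hcomp, mul_inv_cancel, map_one]; rfl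
    · have h1 : ∀ u ∈ Of, u - w₀ ∈ imSub F ρ := by
        intro u hu
        rw [hOf] at hu
        obtain ⟨g, rfl⟩ := hu
        exact Submodule.subset_span ⟨g, w₀, rfl⟩
      have h2 : (∑ u ∈ Of, u) = (∑ u ∈ Of, (u - w₀)) + (Of.card) • w₀ := by
        rw [Finset.sum_sub_distrib, Finset.sum_const, sub_add_cancel]
      rw [h2, show (Of.card) • w₀ = (0 : A) by
        rw [← Nat.cast_smul_eq_nsmul F, hcharp, zero_smul], add_zero]
      exact Submodule.sum_mem _ h1
    · intro i
      rw [map_sum, Finset.sum_apply']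
      rw [Finset.sum_congr rfl fun u hu => hrepr_basis u (hOmemΩ u hu) i]
      rw [Finset.sum_ite_eq' Of (i : A) (fun _ => (1 : F))]
      simp [hOf]
  -- main induction: fixed vectors with vanishing coordinates at fixed basis
  -- elements lie in imSub
  have main : ∀ (N : ℕ) (x : A), x ∈ fixSub F ρ →
      (∀ i : ι, (∀ g, ρ g (i : A) = (i : A)) → b.repr x i = 0) →
      (Finset.univ.filter fun i : ι => b.repr x i ≠ 0).card ≤ N →
      x ∈ imSub F ρ := by
    intro N
    induction N with
    | zero =>
      intro x _ _ hc
      have hz : ∀ i : ι, b.repr x i = 0 := by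
        intro i
        by_contra h
        have hmemf : i ∈ Finset.univ.filter fun i : ι => b.repr x i ≠ 0 := by
          simp [h]
        have := Finset.card_pos.mpr ⟨i, hmemf⟩
        omega
      have hx0 : x = 0 := by
        have : b.repr x = 0 := Finsupp.ext hz
        simpa using congrArg b.repr.symm this
      rw [hx0]; exact zero_mem _
    | succ N ih =>
      intro x hx hz hc
      by_cases hx0 : ∀ i : ι, b.repr x i = 0
      · have : x = 0 := by
          have : b.repr x = 0 := Finsupp.ext hx0
          simpa using congrArg b.repr.symm this
        rw [this]; exact zero_mem _
      · push_neg at hx0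
        obtain ⟨i₀, hi₀⟩ := hx0
        have hw₀Ω : (i₀ : A) ∈ Ω := hmem i₀
        have hw₀nf : ¬ ∀ g, ρ g (i₀ : A) = (i₀ : A) := fun h => hi₀ (hz i₀ h)
        push_neg at hw₀nf
        obtain ⟨g₀, hg₀⟩ := hw₀nf
        obtain ⟨t, htf, hti, htr⟩ := horb (i₀ : A) hw₀Ω g₀ hg₀
        have hconst : ∀ i : ι, (i : A) ∈ orbit G (i₀ : A) →
            b.repr x i = b.repr x i₀ := by
          intro i hi
          obtain ⟨g, hg⟩ := hi
          have hi_eq : i = (⟨ρ g (i₀ : A), hstab _ hw₀Ω g⟩ : ι) :=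
            Subtype.ext (by rw [← hg]; rfl)
          conv_lhs => rw [hi_eq, ← mem_fixSub.mp hx g]
          exact hrepr g (i₀ : A) hw₀Ω x
        have hnofix : ∀ i : ι, (∀ g, ρ g (i : A) = (i : A)) →
            (i : A) ∉ orbit G (i₀ : A) := by
          intro i hfix hiO
          obtain ⟨g, hg⟩ := hiO
          apply hg₀
          have hg' : ρ g (i₀ : A) = (i : A) := hg
          have hii : (i₀ : A) = (i : A) := by
            rw [← hρinv g (i₀ : A), hg', hfix g⁻¹]
          rw [hii]; exact hfix g₀
        set cv := b.repr x i₀ with hcv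
        have hx'fix : x - cv • t ∈ fixSub F ρ :=
          sub_mem hx (Submodule.smul_mem _ _ htf)
        have hx'repr : ∀ i : ι, b.repr (x - cv • t) i
            = b.repr x i - cv * (if (i : A) ∈ orbit G (i₀ : A) then 1 else 0) := by
          intro i
          rw [map_sub, map_smul, Finsupp.sub_apply, Finsupp.smul_apply, htr i,
            smul_eq_mul]
        have hx'z : ∀ i : ι, (∀ g, ρ g (i : A) = (i : A)) →
            b.repr (x - cv • t) i = 0 := by
          intro i hfix
          rw [hx'repr i, if_neg (hnofix i hfix), hz i hfix, mul_zero, sub_zero]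
        have hi₀mem : i₀ ∈ Finset.univ.filter fun i : ι => b.repr x i ≠ 0 := by
          exact Finset.mem_filter.mpr ⟨Finset.mem_univ _, hi₀⟩
        have hsupp : (Finset.univ.filter fun i : ι => b.repr (x - cv • t) i ≠ 0)
            ⊆ (Finset.univ.filter fun i : ι => b.repr x i ≠ 0).erase i₀ := by
          intro i hi
          simp only [Finset.mem_filter, Finset.mem_univ, true_and] at hi
          rw [Finset.mem_erase, Finset.mem_filter]
          by_cases hiO : (i : A) ∈ orbit G (i₀ : A)
          · exfalso
            apply hi
            rw [hx'repr i, if_pos hiO, mul_one, hconst i hiO, sub_self]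
          · have hrepr_eq : b.repr (x - cv • t) i = b.repr x i := by
              rw [hx'repr i, if_neg hiO, mul_zero, sub_zero]
            refine ⟨?_, Finset.mem_univ _, by rwa [hrepr_eq] at hi⟩
            rintro rfl
            exact hiO (mem_orbit_self _)
        have hcard' : (Finset.univ.filter
            fun i : ι => b.repr (x - cv • t) i ≠ 0).card ≤ N := by
          have h1 := Finset.card_le_card hsupp
          rw [Finset.card_erase_of_mem hi₀mem] at h1
          have h2 := Finset.card_pos.mpr ⟨i₀, hi₀mem⟩
          omega
        have hx'im := ih (x - cv • t) hx'fix hx'z hcard'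
        have hxeq : x = (x - cv • t) + cv • t := (sub_add_cancel x (cv • t)).symm
        rw [hxeq]
        exact add_mem hx'im (Submodule.smul_mem _ _ hti)
  -- coordinates of imSub vanish at fixed basis vectors
  have him_coord : ∀ (jA : A) (hjΩ : jA ∈ Ω), (∀ g, ρ g jA = jA) →
      ∀ v ∈ imSub F ρ, b.repr v ⟨jA, hjΩ⟩ = 0 := by
    intro jA hjΩ hjfix v hv
    induction hv using Submodule.span_induction with
    | mem y hy =>
      obtain ⟨g, v', rfl⟩ := hy
      rw [map_sub, Finsupp.sub_apply]
      have h2 : (⟨jA, hjΩ⟩ : ι) = ⟨ρ g jA, hstab jA hjΩ g⟩ :=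
        Subtype.ext (hjfix g).symm
      have h3 : b.repr (ρ g v') ⟨jA, hjΩ⟩ = b.repr v' ⟨jA, hjΩ⟩ := by
        conv_lhs => rw [h2]
        exact hrepr g jA hjΩ v'
      rw [h3, sub_self]
    | zero => simp
    | add y z _ _ hy hz => rw [map_add, Finsupp.add_apply, hy, hz, add_zero]
    | smul c y _ hy => rw [map_smul, Finsupp.smul_apply, hy, smul_zero]
  -- the fixed-point finset
  let Ωf : Finset A := Ω.filter (fun w => ∀ g : G, ρ g w = w)
  have hncard : {w ∈ (Ω : Set A) | ∀ g : G, ρ g w = w}.ncard = Ωf.card := by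
    rw [show {w ∈ (Ω : Set A) | ∀ g : G, ρ g w = w} = ↑Ωf by
      ext w; simp [Ωf]]
    exact Set.ncard_coe_finset _
  have hΩfΩ : ∀ j : ↥Ωf, (j : A) ∈ Ω := fun j => (Finset.mem_filter.mp j.2).1
  have hΩffix : ∀ (j : ↥Ωf) (g : G), ρ g (j : A) = (j : A) :=
    fun j => (Finset.mem_filter.mp j.2).2
  let e : ↥Ωf → ι := fun j => ⟨(j : A), hΩfΩ j⟩
  let π : A →ₗ[F] (↥Ωf → F) :=
    { toFun := fun v j => b.repr v (e j)
      map_add' := fun v w => by funext j; simp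
      map_smul' := fun c v => by funext j; simp }
  let πF : ↥(fixSub F ρ) →ₗ[F] (↥Ωf → F) := π.comp (fixSub F ρ).subtype
  have hπF : ∀ (x : ↥(fixSub F ρ)) (j : ↥Ωf), πF x j = b.repr (x : A) (e j) :=
    fun x j => rfl
  have hsurj : LinearMap.range πF = ⊤ := by
    rw [LinearMap.range_eq_top]
    intro f
    have hsum : (∑ j : ↥Ωf, f j • (j : A)) ∈ fixSub F ρ := by
      intro g
      rw [map_sum]
      exact Finset.sum_congr rfl fun j _ => by rw [map_smul, hΩffix j g]
    refine ⟨⟨∑ j : ↥Ωf, f j • (j : A), hsum⟩, ?_⟩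
    funext j'
    rw [hπF]
    show b.repr (∑ j : ↥Ωf, f j • (j : A)) (e j') = f j'
    rw [map_sum, Finset.sum_apply']
    have hterm : ∀ j : ↥Ωf, (b.repr (f j • (j : A))) (e j')
        = if j = j' then f j else 0 := by
      intro j
      rw [map_smul, Finsupp.smul_apply, hrepr_basis (j : A) (hΩfΩ j) (e j'),
        smul_eq_mul]
      have hiff : ((j : A) = ((e j' : ι) : A)) ↔ j = j' := by
        constructor
        · intro h; exact Subtype.ext h
        · rintro rfl; rfl
      by_cases h : j = j'
      · rw [if_pos (hiff.mpr h), if_pos h, mul_one]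
      · rw [if_neg (fun hh => h (hiff.mp hh)), if_neg h, mul_zero]
    rw [Finset.sum_congr rfl fun j _ => hterm j]
    simp
  have hker : LinearMap.ker πF
      = Submodule.comap (fixSub F ρ).subtype (fixSub F ρ ⊓ imSub F ρ) := by
    ext x
    simp only [LinearMap.mem_ker, Submodule.mem_comap, Submodule.mem_inf,
      Submodule.coe_subtype]
    constructor
    · intro hpx
      refine ⟨x.2, ?_⟩
      refine main (Finset.univ.filter fun i : ι => b.repr (x : A) i ≠ 0).card
        (x : A) x.2 ?_ le_rfl
      intro i hfix
      have hjf : (i : A) ∈ Ωf := Finset.mem_filter.mpr ⟨hmem i, hfix⟩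
      have h1 : b.repr (x : A) (e ⟨(i : A), hjf⟩) = 0 := by
        have := congrFun hpx ⟨(i : A), hjf⟩
        simpa [hπF] using this
      have h2 : e ⟨(i : A), hjf⟩ = i := Subtype.ext rfl
      rwa [h2] at h1
    · rintro ⟨-, hxim⟩
      funext j
      rw [hπF]
      show b.repr (x : A) (e j) = (0 : F)
      exact him_coord (j : A) (hΩfΩ j) (hΩffix j) (x : A) hxim
  have hrn := LinearMap.finrank_range_add_finrank_ker πF
  rw [hsurj, hker, finrank_top, Module.finrank_fintype_fun_eq_card,
    Fintype.card_coe] at hrn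
  have hQe := LinearEquiv.finrank_eq (Submodule.comapSubtypeEquivOfLe
    (inf_le_left : fixSub F ρ ⊓ imSub F ρ ≤ fixSub F ρ))
  rw [hQe] at hrn
  rw [hncard]
  exact hrn

theorem key_iso (ρ₁ ρ₂ : G →* (A ≃ₗ[F] A)) (θ : A ≃ₗ[F] A)
    (hθ : ∀ g x, θ (ρ₁ g x) = ρ₂ g (θ x)) :
    Submodule.map (θ : A →ₗ[F] A) (fixSub F ρ₁) = fixSub F ρ₂ ∧
    Submodule.map (θ : A →ₗ[F] A) (imSub F ρ₁) = imSub F ρ₂ := by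
  constructor
  · ext x
    simp only [Submodule.mem_map, mem_fixSub, LinearEquiv.coe_coe]
    constructor
    · rintro ⟨y, hy, rfl⟩ g
      rw [← hθ, hy g]
    · intro hx
      refine ⟨θ.symm x, fun g => ?_, θ.apply_symm_apply x⟩
      apply θ.injective
      rw [hθ, θ.apply_symm_apply, hx g]
  · rw [imSub, Submodule.map_span, imSub]
    congr 1
    ext z
    simp only [Set.mem_image, Set.mem_setOf_eq, LinearEquiv.coe_coe]
    constructor
    · rintro ⟨_, ⟨g, v, rfl⟩, rfl⟩
      exact ⟨g, θ v, by rw [map_sub, hθ]⟩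
    · rintro ⟨g, v, rfl⟩
      exact ⟨ρ₁ g (θ.symm v) - θ.symm v, ⟨g, θ.symm v, rfl⟩,
        by rw [map_sub, hθ, θ.apply_symm_apply]⟩

theorem key_eq (hG : IsPGroup p G) (ρ₁ ρ₂ : G →* (A ≃ₗ[F] A)) (Ω : Finset A)
    (hli : LinearIndependent F (fun x : (Ω : Set A) => (x : A)))
    (hsp : Submodule.span F (Ω : Set A) = ⊤)
    (hstab₁ : ∀ w ∈ Ω, ∀ g : G, ρ₁ g w ∈ Ω)
    (hstab₂ : ∀ w ∈ Ω, ∀ g : G, ρ₂ g w ∈ Ω)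
    (θ : A ≃ₗ[F] A)
    (hθ : ∀ g x, θ (ρ₁ g x) = ρ₂ g (θ x)) :
    {w ∈ (Ω : Set A) | ∀ g : G, ρ₁ g w = w}.ncard
      = {w ∈ (Ω : Set A) | ∀ g : G, ρ₂ g w = w}.ncard := by
  have h₁ := key_count hG ρ₁ Ω hli hsp hstab₁
  have h₂ := key_count hG ρ₂ Ω hli hsp hstab₂
  obtain ⟨hfix, him⟩ := key_iso ρ₁ ρ₂ θ hθ
  have hinj : Function.Injective (θ : A →ₗ[F] A) := θ.injective
  have hinf : Submodule.map (θ : A →ₗ[F] A) (fixSub F ρ₁ ⊓ imSub F ρ₁)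
      = fixSub F ρ₂ ⊓ imSub F ρ₂ := by
    rw [Submodule.map_inf _ hinj, hfix, him]
  have e1 : finrank F ↥(fixSub F ρ₁) = finrank F ↥(fixSub F ρ₂) := by
    rw [← hfix]; exact (LinearEquiv.finrank_map_eq θ _).symm
  have e2 : finrank F ↥(fixSub F ρ₁ ⊓ imSub F ρ₁)
      = finrank F ↥(fixSub F ρ₂ ⊓ imSub F ρ₂) := by
    rw [← hinf]; exact (LinearEquiv.finrank_map_eq θ _).symm
  omega

end Key
section App

variable (F : Type*) [Field F] {A : Type*} [Ring A] [Algebra F A]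

/-- The linear automorphism `x ↦ a * x * c⁻¹` for units `a c`. -/
def lr (a c : Aˣ) : A ≃ₗ[F] A where
  toFun x := (a : A) * x * ((c⁻¹ : Aˣ) : A)
  invFun x := ((a⁻¹ : Aˣ) : A) * x * (c : A)
  map_add' x y := by simp [mul_add, add_mul]
  map_smul' r x := by simp [mul_smul_comm, smul_mul_assoc]
  left_inv x := by simp [mul_assoc]
  right_inv x := by simp [mul_assoc]

lemma lr_apply (a c : Aˣ) (x : A) :
    lr F a c x = (a : A) * x * ((c⁻¹ : Aˣ) : A) := rfl

lemma lr_mul (a a' c c' : Aˣ) :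
    lr F (a * a') (c * c') = lr F a c * lr F a' c' := by
  refine LinearEquiv.ext fun x => ?_
  show lr F (a * a') (c * c') x = lr F a c (lr F a' c' x)
  simp [lr_apply, Units.val_mul, mul_inv_rev, mul_assoc]

end App

/-- From the proof of Theorem 6.4: let `Ω` be a `D×D`-stable basis of the interior
`D`-algebra `A` over a field of characteristic `p` (`D` a finite `p`-group), let
`φ : Q → P` be an isomorphism between subgroups of `D`, and suppose there is a unit `u`
with `σ(φ(q)) u = u σ(q)` for all `q ∈ Q`.  Then `|Ω^{Δφ}| = |Ω^{ΔQ}| = |Ω^{ΔP}|`. -/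
theorem stmt12 (F : Type*) [Field F] (p : ℕ) [Fact p.Prime] [CharP F p]
    (D : Type*) [Group D] [Finite D] (hD : IsPGroup p D)
    (A : Type*) [Ring A] [Algebra F A] [FiniteDimensional F A] (σ : D →* Aˣ)
    (Ω : Finset A)
    (hbasis : LinearIndependent F (fun x : (Ω : Set A) => (x : A)) ∧
      Submodule.span F (Ω : Set A) = ⊤)
    (hstable : ∀ w ∈ Ω, ∀ f g : D, (σ f : A) * w * ((σ g)⁻¹ : Aˣ) ∈ Ω)
    (P Q : Subgroup D) (φ : Q ≃* P) (u : Aˣ)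
    (hu : ∀ q : Q, (σ ((φ q : P) : D) : A) * (u : A) = (u : A) * (σ (q : D) : A)) :
    {w ∈ (Ω : Set A) | ∀ q : Q,
        (σ ((φ q : P) : D) : A) * w * (((σ (q : D))⁻¹ : Aˣ) : A) = w}.ncard
      = {w ∈ (Ω : Set A) | ∀ q : Q, (σ (q : D) : A) * w = w * (σ (q : D) : A)}.ncard ∧
    {w ∈ (Ω : Set A) | ∀ q : Q,
        (σ ((φ q : P) : D) : A) * w * (((σ (q : D))⁻¹ : Aˣ) : A) = w}.ncard
      = {w ∈ (Ω : Set A) | ∀ g : P, (σ (g : D) : A) * w = w * (σ (g : D) : A)}.ncard := by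
  classical
  obtain ⟨hli, hsp⟩ := hbasis
  have hQp : IsPGroup p ↥Q := hD.to_subgroup Q
  -- the units equation
  have hu' : ∀ q : Q, σ ((φ q : P) : D) * u = u * σ (q : D) := by
    intro q
    ext
    simpa [Units.val_mul] using hu q
  -- the three actions
  let ρ₁ : ↥Q →* (A ≃ₗ[F] A) := MonoidHom.mk'
    (fun q => lr F (σ ((φ q : P) : D)) (σ (q : D)))
    (by
      intro q q'
      have h1 : σ (((φ (q * q')) : P) : D)
          = σ ((φ q : P) : D) * σ ((φ q' : P) : D) := by
        rw [map_mul φ, Subgroup.coe_mul, map_mul]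
      have h2 : σ ((q * q' : Q) : D) = σ (q : D) * σ (q' : D) := by
        rw [Subgroup.coe_mul, map_mul]
      show lr F (σ (((φ (q * q')) : P) : D)) (σ ((q * q' : Q) : D))
        = lr F (σ ((φ q : P) : D)) (σ (q : D)) * lr F (σ ((φ q' : P) : D)) (σ (q' : D))
      rw [h1, h2, lr_mul])
  let ρ₂ : ↥Q →* (A ≃ₗ[F] A) := MonoidHom.mk'
    (fun q => lr F (σ (q : D)) (σ (q : D)))
    (by
      intro q q'
      have h2 : σ ((q * q' : Q) : D) = σ (q : D) * σ (q' : D) := by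
        rw [Subgroup.coe_mul, map_mul]
      show lr F (σ ((q * q' : Q) : D)) (σ ((q * q' : Q) : D))
        = lr F (σ (q : D)) (σ (q : D)) * lr F (σ (q' : D)) (σ (q' : D))
      rw [h2, lr_mul])
  let ρ₃ : ↥Q →* (A ≃ₗ[F] A) := MonoidHom.mk'
    (fun q => lr F (σ ((φ q : P) : D)) (σ ((φ q : P) : D)))
    (by
      intro q q'
      have h1 : σ (((φ (q * q')) : P) : D)
          = σ ((φ q : P) : D) * σ ((φ q' : P) : D) := by
        rw [map_mul φ, Subgroup.coe_mul, map_mul]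
      show lr F (σ (((φ (q * q')) : P) : D)) (σ (((φ (q * q')) : P) : D))
        = lr F (σ ((φ q : P) : D)) (σ ((φ q : P) : D))
          * lr F (σ ((φ q' : P) : D)) (σ ((φ q' : P) : D))
      rw [h1, lr_mul])
  -- stability
  have hstab₁ : ∀ w ∈ Ω, ∀ q : ↥Q, ρ₁ q w ∈ Ω :=
    fun w hw q => hstable w hw ((φ q : P) : D) (q : D)
  have hstab₂ : ∀ w ∈ Ω, ∀ q : ↥Q, ρ₂ q w ∈ Ω :=
    fun w hw q => hstable w hw (q : D) (q : D)
  have hstab₃ : ∀ w ∈ Ω, ∀ q : ↥Q, ρ₃ q w ∈ Ω :=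
    fun w hw q => hstable w hw ((φ q : P) : D) ((φ q : P) : D)
  -- intertwiners
  have hθ12 : ∀ (q : ↥Q) (x : A), lr F u⁻¹ 1 (ρ₁ q x) = ρ₂ q (lr F u⁻¹ 1 x) := by
    intro q x
    have h2 : u⁻¹ * σ ((φ q : P) : D) = σ (q : D) * u⁻¹ := by
      rw [inv_mul_eq_iff_eq_mul, ← mul_assoc, ← hu' q, mul_inv_cancel_right]
    have h2A : ((u⁻¹ : Aˣ) : A) * (σ ((φ q : P) : D) : A)
        = (σ (q : D) : A) * ((u⁻¹ : Aˣ) : A) := by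
      simpa [Units.val_mul] using congrArg Units.val h2
    show ((u⁻¹ : Aˣ) : A) * ((σ ((φ q : P) : D) : A) * x * (((σ (q : D))⁻¹ : Aˣ) : A))
          * (((1 : Aˣ)⁻¹ : Aˣ) : A)
        = (σ (q : D) : A) * (((u⁻¹ : Aˣ) : A) * x * (((1 : Aˣ)⁻¹ : Aˣ) : A))
          * (((σ (q : D))⁻¹ : Aˣ) : A)
    simp only [inv_one, Units.val_one, mul_one, ← mul_assoc]
    rw [h2A]
  have hθ13 : ∀ (q : ↥Q) (x : A), lr F 1 u (ρ₁ q x) = ρ₃ q (lr F 1 u x) := by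
    intro q x
    have h3 : (σ (q : D))⁻¹ * u⁻¹ = u⁻¹ * (σ ((φ q : P) : D))⁻¹ := by
      rw [← mul_inv_rev, ← mul_inv_rev, hu' q]
    have h3A : (((σ (q : D))⁻¹ : Aˣ) : A) * ((u⁻¹ : Aˣ) : A)
        = ((u⁻¹ : Aˣ) : A) * (((σ ((φ q : P) : D))⁻¹ : Aˣ) : A) := by
      simpa [Units.val_mul] using congrArg Units.val h3
    show ((1 : Aˣ) : A) * ((σ ((φ q : P) : D) : A) * x * (((σ (q : D))⁻¹ : Aˣ) : A))
          * ((u⁻¹ : Aˣ) : A)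
        = (σ ((φ q : P) : D) : A) * (((1 : Aˣ) : A) * x * ((u⁻¹ : Aˣ) : A))
          * (((σ ((φ q : P) : D))⁻¹ : Aˣ) : A)
    simp only [Units.val_one, one_mul, mul_assoc]
    rw [h3A]
  have h12 := key_eq hQp ρ₁ ρ₂ Ω hli hsp hstab₁ hstab₂ (lr F u⁻¹ 1) hθ12
  have h13 := key_eq hQp ρ₁ ρ₃ Ω hli hsp hstab₁ hstab₃ (lr F 1 u) hθ13
  -- identify the sets
  have hS1 : {w ∈ (Ω : Set A) | ∀ q : Q,
        (σ ((φ q : P) : D) : A) * w * (((σ (q : D))⁻¹ : Aˣ) : A) = w}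
      = {w ∈ (Ω : Set A) | ∀ q : ↥Q, ρ₁ q w = w} := rfl
  have hS2 : {w ∈ (Ω : Set A) | ∀ q : ↥Q, ρ₂ q w = w}
      = {w ∈ (Ω : Set A) | ∀ q : Q, (σ (q : D) : A) * w = w * (σ (q : D) : A)} := by
    ext w
    simp only [Set.mem_setOf_eq, and_congr_right_iff]
    intro _
    refine forall_congr' fun q => ?_
    show (σ (q : D) : A) * w * (((σ (q : D))⁻¹ : Aˣ) : A) = w
        ↔ (σ (q : D) : A) * w = w * (σ (q : D) : A)
    exact Units.mul_inv_eq_iff_eq_mul _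
  have hS3 : {w ∈ (Ω : Set A) | ∀ q : ↥Q, ρ₃ q w = w}
      = {w ∈ (Ω : Set A) | ∀ g : P, (σ (g : D) : A) * w = w * (σ (g : D) : A)} := by
    ext w
    simp only [Set.mem_setOf_eq, and_congr_right_iff]
    intro _
    constructor
    · intro h g
      have h' : (σ ((φ (φ.symm g) : P) : D) : A) * w
          * (((σ ((φ (φ.symm g) : P) : D))⁻¹ : Aˣ) : A) = w := h (φ.symm g)
      have hg : φ (φ.symm g) = g := φ.apply_symm_apply g
      rw [hg] at h'
      exact (Units.mul_inv_eq_iff_eq_mul _).mp h'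
    · intro h q
      show (σ ((φ q : P) : D) : A) * w * (((σ ((φ q : P) : D))⁻¹ : Aˣ) : A) = w
      exact (Units.mul_inv_eq_iff_eq_mul _).mpr (h (φ q))
  rw [hS1, ← hS2, ← hS3]
  exact ⟨h12, h13⟩
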